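/- Let (A, h, δ) be an AsGDer triple and (M, h_M, δ_M) an AsGDer-module over (A, h, δ). On the semi-direct product algebra A ⋉ M = A ⊕ M with multiplication (a, m)·(b, n) = (ab, an + mb), the map h ⊕ h_M is a derivation and the map δ ⊕ δ_M is a generalized (h ⊕ h_M)-derivation; hence (A ⋉ M, h ⊕ h_M, δ ⊕ δ_M) is an AsGDer triple. -/
import Mathlib


open MulOpposite

/-- Let `(A, h, δ)` be an AsGDer triple and `(M, h_M, δ_M)` an
AsGDer-module over it (`M` an `A`-bimodule, right action written via `Aᵐᵒᵖ`).  On the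
semi-direct product `A ⋉ M = A × M` with multiplication
`(a, m)·(b, n) = (ab, a•n + m•b)`, the map `h ⊕ h_M` is a derivation and `δ ⊕ δ_M` is
a generalized `(h ⊕ h_M)`-derivation; hence `(A ⋉ M, h ⊕ h_M, δ ⊕ δ_M)` is an AsGDer
triple. -/
theorem semidirect_product_AsGDer_triple
    {k A M : Type*} [Field k] [CharZero k] [Ring A] [Algebra k A]
    [AddCommGroup M] [Module k M] [Module A M] [Module Aᵐᵒᵖ M]
    [SMulCommClass A Aᵐᵒᵖ M] [IsScalarTower k A M] [IsScalarTower k Aᵐᵒᵖ M]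
    (h δ : A →ₗ[k] A) (hM δM : M →ₗ[k] M)
    (hder : ∀ a b : A, h (a * b) = h a * b + a * h b)
    (hgen : ∀ a b : A, δ (a * b) = δ a * b + a * h b)
    (hM1 : ∀ (a : A) (m : M), hM (a • m) = h a • m + a • hM m)
    (hM2 : ∀ (a : A) (m : M), hM (op a • m) = op a • hM m + op (h a) • m)
    (dM1 : ∀ (a : A) (m : M), δM (a • m) = δ a • m + a • hM m)
    (dM2 : ∀ (a : A) (m : M), δM (op a • m) = op a • δM m + op (h a) • m) :
    let mul : A × M → A × M → A × M := fun p q => (p.1 * q.1, p.1 • q.2 + op q.1 • p.2)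
    let H : A × M → A × M := fun p => (h p.1, hM p.2)
    let D : A × M → A × M := fun p => (δ p.1, δM p.2)
    (∀ p q r : A × M, mul (mul p q) r = mul p (mul q r)) ∧
    (∀ p q : A × M, H (mul p q) = mul (H p) q + mul p (H q)) ∧
    (∀ p q : A × M, D (mul p q) = mul (D p) q + mul p (H q)) := by
  intro mul H D
  refine ⟨fun p q r => ?_, fun p q => ?_, fun p q => ?_⟩
  · simp only [mul, Prod.mk.injEq]
    constructor
    · rw [mul_assoc]
    · simp [mul_smul, smul_add, op_mul, smul_comm]
      abel
  · simp only [mul, H, Prod.mk.injEq, Prod.mk_add_mk, hder, map_add, hM1, hM2]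
    constructor
    · trivial
    · abel
  · simp only [mul, H, D, Prod.mk.injEq, Prod.mk_add_mk, hgen, map_add, dM1, hM2, dM2]
    constructor
    · trivial
    · abel
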